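/- Let α > 0 and set C = (√(1 + 16α²) − 1)/(4α). Then the function ψ₀(x) = (1 + C cos 2x) e^{α cos 2x} satisfies the Whittaker–Hill equation with s = 3: −ψ₀″ − (12α cos 2x + 2α² cos 4x) ψ₀ = λ₀ ψ₀ on ℝ, where λ₀ = 2(1 − √(1 + 16α²)) − 2α². -/

import Mathlib

/-- for `s = 3` the Whittaker–Hill operator has the explicit ground
state `ψ₀(x) = (1 + C cos 2x) e^{α cos 2x}`, `C = (√(1+16α²) - 1)/(4α)`, with
eigenvalue `λ₀ = 2(1 - √(1+16α²)) - 2α²`. -/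
theorem whittaker_hill_s_three_ground_state
    (α : ℝ) (hα : 0 < α)
    (C : ℝ) (hC : C = (Real.sqrt (1 + 16 * α ^ 2) - 1) / (4 * α))
    (ψ₀ : ℝ → ℝ)
    (hψ₀ : ∀ x : ℝ, ψ₀ x = (1 + C * Real.cos (2 * x)) * Real.exp (α * Real.cos (2 * x)))
    (lam₀ : ℝ) (hlam₀ : lam₀ = 2 * (1 - Real.sqrt (1 + 16 * α ^ 2)) - 2 * α ^ 2) :
    ∀ x : ℝ,
      -deriv (deriv ψ₀) x
        - (12 * α * Real.cos (2 * x) + 2 * α ^ 2 * Real.cos (4 * x)) * ψ₀ x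
      = lam₀ * ψ₀ x := by
  have hα4 : (4 * α) ≠ 0 := by positivity
  have hD : (0:ℝ) ≤ 1 + 16 * α ^ 2 := by positivity
  have h1 : Real.sqrt (1 + 16 * α ^ 2) = 4 * α * C + 1 := by
    rw [hC]; field_simp; ring
  have hsq : (4 * α * C + 1) ^ 2 = 1 + 16 * α ^ 2 := by
    rw [← h1, Real.sq_sqrt hD]
  have hrel : 2 * α * C ^ 2 + C = 2 * α := by
    have h8 : 16 * α ^ 2 * C ^ 2 + 8 * α * C = 16 * α ^ 2 := by nlinarith [hsq]
    have : 8 * α * (2 * α * C ^ 2 + C - 2 * α) = 0 := by nlinarith [h8]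
    have h8α : (8 * α) ≠ 0 := by positivity
    have := mul_eq_zero.mp this
    rcases this with h | h
    · exact absurd h h8α
    · linarith
  have hlam : lam₀ = -8 * α * C - 2 * α ^ 2 := by rw [hlam₀, h1]; ring
  have hcos : ∀ x : ℝ, HasDerivAt (fun x => Real.cos (2 * x)) (-2 * Real.sin (2 * x)) x := by
    intro x
    have h := (Real.hasDerivAt_cos (2 * x)).comp x ((hasDerivAt_id x).const_mul 2)
    convert h using 1 <;> try rfl
    ring
  have hsin : ∀ x : ℝ, HasDerivAt (fun x => Real.sin (2 * x)) (2 * Real.cos (2 * x)) x := by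
    intro x
    have h := (Real.hasDerivAt_sin (2 * x)).comp x ((hasDerivAt_id x).const_mul 2)
    convert h using 1 <;> try rfl
    ring
  set g : ℝ → ℝ := fun x =>
    (-2 * Real.sin (2 * x) * (C + α + α * C * Real.cos (2 * x))) * Real.exp (α * Real.cos (2 * x))
    with hg
  have hd1 : ∀ x : ℝ, HasDerivAt ψ₀ (g x) x := by
    intro x
    have hu : HasDerivAt (fun x => 1 + C * Real.cos (2 * x)) (C * (-2 * Real.sin (2 * x))) x :=
      ((hcos x).const_mul C).const_add 1
    have hv : HasDerivAt (fun x => Real.exp (α * Real.cos (2 * x)))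
        ((α * (-2 * Real.sin (2 * x))) * Real.exp (α * Real.cos (2 * x))) x :=
      by simpa [mul_comm] using ((hcos x).const_mul α).exp
    have h := hu.mul hv
    have hfun : ψ₀ = fun x => (1 + C * Real.cos (2 * x)) * Real.exp (α * Real.cos (2 * x)) :=
      funext hψ₀
    rw [hfun]
    convert h using 1 <;> try rfl
    rw [hg]; ring
  have hd2 : ∀ x : ℝ, HasDerivAt g
      (((-4 * Real.cos (2 * x) * (C + α + α * C * Real.cos (2 * x))
        + 4 * α * C * Real.sin (2 * x) ^ 2
        + 4 * α * Real.sin (2 * x) ^ 2 * (C + α + α * C * Real.cos (2 * x))))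
        * Real.exp (α * Real.cos (2 * x))) x := by
    intro x
    have hp : HasDerivAt (fun x => -2 * Real.sin (2 * x) * (C + α + α * C * Real.cos (2 * x)))
        ((-2 * (2 * Real.cos (2 * x))) * (C + α + α * C * Real.cos (2 * x))
          + (-2 * Real.sin (2 * x)) * (α * C * (-2 * Real.sin (2 * x)))) x := by
      exact ((hsin x).const_mul (-2)).mul (((hcos x).const_mul (α * C)).const_add (C + α))
    have hv : HasDerivAt (fun x => Real.exp (α * Real.cos (2 * x)))
        ((α * (-2 * Real.sin (2 * x))) * Real.exp (α * Real.cos (2 * x))) x :=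
      by simpa [mul_comm] using ((hcos x).const_mul α).exp
    have h := hp.mul hv
    convert h using 1 <;> try rfl
    ring
  have hderiv1 : deriv ψ₀ = g := funext fun x => (hd1 x).deriv
  intro x
  have hderiv2 : deriv (deriv ψ₀) x =
      ((-4 * Real.cos (2 * x) * (C + α + α * C * Real.cos (2 * x))
        + 4 * α * C * Real.sin (2 * x) ^ 2
        + 4 * α * Real.sin (2 * x) ^ 2 * (C + α + α * C * Real.cos (2 * x))))
        * Real.exp (α * Real.cos (2 * x)) := by
    rw [hderiv1]; exact (hd2 x).deriv
  have hc4 : Real.cos (4 * x) = 2 * Real.cos (2 * x) ^ 2 - 1 := by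
    have : (4:ℝ) * x = 2 * (2 * x) := by ring
    rw [this, Real.cos_two_mul]
  have hs2 : Real.sin (2 * x) ^ 2 + Real.cos (2 * x) ^ 2 = 1 := Real.sin_sq_add_cos_sq _
  rw [hderiv2, hψ₀ x, hc4, hlam]
  set c := Real.cos (2 * x)
  set s := Real.sin (2 * x)
  set E := Real.exp (α * c)
  linear_combination (4 * c * E) * hrel
    + (-(4 * α * C + 4 * α * (C + α + α * C * c)) * E) * hs2
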